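/- Let s be even with 2 ≤ s ≤ p and s + 1 ≤ m. In the universal enveloping algebra U of gl(n,ℂ) the even external coordinate Ê_s satisfies the following commutation relations with the initial root vectors: (a) [ι(E_{i,n−i+1}), Ê_s] = 0 for all 1 ≤ i < s; (b) [ι(E_{s,n−s+1}), Ê_s] = (1 + ι(E_{s,n−s+1}))·ι(E_{s,n−s}); (c) [ι(E_{s+1,n−s}), Ê_s] = −(1 + ι(E_{s+1,n−s}))·ι(E_{s,n−s}); (d) [ι(E_{i,n−i+1}), Ê_s] = 0 for all i with s + 1 < i ≤ m. -/

import Mathlib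

open Matrix Finset

attribute [local instance 100] LieRing.ofAssociativeRing

/-- The matrix unit `E_{i,j}` (1-based indices), `0` for out-of-range indices. -/
def E (n : ℕ) (i j : ℕ) : Matrix (Fin n) (Fin n) ℂ :=
  if h : 1 ≤ i ∧ i ≤ n ∧ 1 ≤ j ∧ j ≤ n then
    Matrix.single ⟨i - 1, by omega⟩ ⟨j - 1, by omega⟩ 1
  else 0

/-- The Cartan element `Ĥ_l` of the `l`-th link of the full chain. -/
noncomputable def Hhat (n l : ℕ) : Matrix (Fin n) (Fin n) ℂ :=
  if Odd l then
    ((2 * (l : ℂ) - 1) / (n : ℂ)) • (1 : Matrix (Fin n) (Fin n) ℂ)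
      - ∑ u ∈ Finset.Icc 1 (l - 1), E n u u - ∑ u ∈ Finset.Icc (n - l + 1) n, E n u u
  else
    (-((2 * (l : ℂ) - 1) / (n : ℂ))) • (1 : Matrix (Fin n) (Fin n) ℂ)
      + ∑ u ∈ Finset.Icc 1 l, E n u u + ∑ u ∈ Finset.Icc (n - l + 2) n, E n u u

/-- The element `H_s^⊥` of the complement `H^⊥` of the chain's Cartan carrier. -/
noncomputable def Hperp (n s : ℕ) : Matrix (Fin n) (Fin n) ℂ :=
  ((-1 : ℂ) ^ s) •
    ((-(2 * (s : ℂ) / (n : ℂ))) • (1 : Matrix (Fin n) (Fin n) ℂ)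
      + ∑ u ∈ Finset.Icc 1 s, (E n u u + E n (n - u + 1) (n - u + 1)))

/-- The universal enveloping algebra `U(gl(n,ℂ))`. -/
abbrev Ugl (n : ℕ) := UniversalEnvelopingAlgebra ℂ (Matrix (Fin n) (Fin n) ℂ)

/-- The canonical embedding `ι : gl(n,ℂ) → U(gl(n,ℂ))`. -/
noncomputable def ι (n : ℕ) (A : Matrix (Fin n) (Fin n) ℂ) : Ugl n :=
  UniversalEnvelopingAlgebra.ι ℂ A

/-- The even external coordinate `Ê_s` (for even `s`). -/
noncomputable def Ehat (n s : ℕ) : Ugl n :=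
  ι n (E n (n - s + 1) (n - s)) + ι n (Hhat n (s + 1) - Hhat n s) * ι n (E n s (n - s))
    + ι n (E n s (s + 1))

/-! ### Auxiliary lemmas -/

lemma E_eq_std (n i j : ℕ) (h : 1 ≤ i ∧ i ≤ n ∧ 1 ≤ j ∧ j ≤ n) :
    E n i j = Matrix.single ⟨i-1, by omega⟩ ⟨j-1, by omega⟩ 1 := by
  rw [E, dif_pos h]

lemma E_zero (n i j : ℕ) (h : ¬(1 ≤ i ∧ i ≤ n ∧ 1 ≤ j ∧ j ≤ n)) : E n i j = 0 := by
  rw [E, dif_neg h]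

lemma E_mul_E (n a b c d : ℕ) (h1 : 1 ≤ a ∧ a ≤ n ∧ 1 ≤ b ∧ b ≤ n)
    (h2 : 1 ≤ c ∧ c ≤ n ∧ 1 ≤ d ∧ d ≤ n) :
    E n a b * E n c d = if b = c then E n a d else 0 := by
  obtain ⟨ha, ha', hb, hb'⟩ := h1
  obtain ⟨hc, hc', hd, hd'⟩ := h2
  rw [E_eq_std n a b ⟨ha, ha', hb, hb'⟩, E_eq_std n c d ⟨hc, hc', hd, hd'⟩]
  by_cases h : b = c
  · subst h
    rw [if_pos rfl, E_eq_std n a d ⟨ha, ha', hd, hd'⟩,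
      Matrix.single_mul_single_same, one_mul]
  · rw [if_neg h, Matrix.single_mul_single_of_ne]
    intro hf
    apply h
    have := Fin.mk.inj_iff.mp hf
    omega

lemma E_mul_sum (n a b c d : ℕ) (h1 : 1 ≤ a ∧ a ≤ n ∧ 1 ≤ b ∧ b ≤ n) :
    E n a b * (∑ u ∈ Finset.Icc c d, E n u u) =
      if c ≤ b ∧ b ≤ d then E n a b else 0 := by
  rw [Finset.mul_sum]
  have key : ∀ u ∈ Finset.Icc c d, E n a b * E n u u = if u = b then E n a b else 0 := by
    intro u _
    by_cases hr : 1 ≤ u ∧ u ≤ n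
    · rw [E_mul_E n a b u u h1 ⟨hr.1, hr.2, hr.1, hr.2⟩]
      by_cases h : b = u
      · subst h; simp
      · rw [if_neg h, if_neg (fun hh => h hh.symm)]
    · rw [E_zero n u u (by tauto), mul_zero, if_neg (by rintro rfl; exact hr ⟨h1.2.2.1, h1.2.2.2⟩)]
  rw [Finset.sum_congr rfl key, Finset.sum_ite_eq' (Finset.Icc c d) b (fun _ => E n a b)]
  simp [Finset.mem_Icc]

lemma sum_mul_E (n a b c d : ℕ) (h1 : 1 ≤ a ∧ a ≤ n ∧ 1 ≤ b ∧ b ≤ n) :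
    (∑ u ∈ Finset.Icc c d, E n u u) * E n a b =
      if c ≤ a ∧ a ≤ d then E n a b else 0 := by
  rw [Finset.sum_mul]
  have key : ∀ u ∈ Finset.Icc c d, E n u u * E n a b = if u = a then E n a b else 0 := by
    intro u _
    by_cases hr : 1 ≤ u ∧ u ≤ n
    · rw [E_mul_E n u u a b ⟨hr.1, hr.2, hr.1, hr.2⟩ h1]
      by_cases h : u = a
      · subst h; simp
      · rw [if_neg h, if_neg h]
    · rw [E_zero n u u (by tauto), zero_mul, if_neg (by rintro rfl; exact hr ⟨h1.1, h1.2.1⟩)]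
  rw [Finset.sum_congr rfl key, Finset.sum_ite_eq' (Finset.Icc c d) a (fun _ => E n a b)]
  simp [Finset.mem_Icc]

lemma comm_Hhat_odd (n l a b : ℕ) (hl : Odd l) (h1 : 1 ≤ a ∧ a ≤ n ∧ 1 ≤ b ∧ b ≤ n) :
    E n a b * Hhat n l - Hhat n l * E n a b =
      ((if 1 ≤ a ∧ a ≤ l - 1 then E n a b else 0)
        - (if 1 ≤ b ∧ b ≤ l - 1 then E n a b else 0))
      + ((if n - l + 1 ≤ a ∧ a ≤ n then E n a b else 0)
        - (if n - l + 1 ≤ b ∧ b ≤ n then E n a b else 0)) := by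
  rw [Hhat, if_pos hl, mul_sub, mul_sub, sub_mul, sub_mul,
    E_mul_sum n a b _ _ h1, E_mul_sum n a b _ _ h1,
    sum_mul_E n a b _ _ h1, sum_mul_E n a b _ _ h1,
    mul_smul_comm, smul_mul_assoc, mul_one, one_mul]
  abel

lemma comm_Hhat_even (n l a b : ℕ) (hl : ¬ Odd l) (h1 : 1 ≤ a ∧ a ≤ n ∧ 1 ≤ b ∧ b ≤ n) :
    E n a b * Hhat n l - Hhat n l * E n a b =
      ((if 1 ≤ b ∧ b ≤ l then E n a b else 0)
        - (if 1 ≤ a ∧ a ≤ l then E n a b else 0))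
      + ((if n - l + 2 ≤ b ∧ b ≤ n then E n a b else 0)
        - (if n - l + 2 ≤ a ∧ a ≤ n then E n a b else 0)) := by
  rw [Hhat, if_neg hl, mul_add, mul_add, add_mul, add_mul,
    E_mul_sum n a b _ _ h1, E_mul_sum n a b _ _ h1,
    sum_mul_E n a b _ _ h1, sum_mul_E n a b _ _ h1,
    mul_smul_comm, smul_mul_assoc, mul_one, one_mul]
  abel

lemma ι_zero (n : ℕ) : ι n 0 = 0 := by simp [ι]

lemma ι_neg (n : ℕ) (A : Matrix (Fin n) (Fin n) ℂ) : ι n (-A) = -ι n A := by simp [ι]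

lemma comm_ι (n : ℕ) (A B : Matrix (Fin n) (Fin n) ℂ) :
    ι n A * ι n B - ι n B * ι n A = ι n (A * B - B * A) := by
  have h := LieHom.map_lie (UniversalEnvelopingAlgebra.ι ℂ) A B
  rw [Ring.lie_def, Ring.lie_def] at h
  exact h.symm

lemma comm_expand {R : Type*} [Ring R] (X A H Y B : R) :
    X * (A + H * Y + B) - (A + H * Y + B) * X =
      (X * A - A * X) + ((X * H - H * X) * Y + H * (X * Y - Y * X)) + (X * B - B * X) := by
  noncomm_ring

lemma comm_Ehat (n s : ℕ) (X : Matrix (Fin n) (Fin n) ℂ) :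
    ι n X * Ehat n s - Ehat n s * ι n X =
      ι n (X * E n (n-s+1) (n-s) - E n (n-s+1) (n-s) * X)
      + (ι n (X * (Hhat n (s+1) - Hhat n s) - (Hhat n (s+1) - Hhat n s) * X) * ι n (E n s (n-s))
         + ι n (Hhat n (s+1) - Hhat n s) * ι n (X * E n s (n-s) - E n s (n-s) * X))
      + ι n (X * E n s (s+1) - E n s (s+1) * X) := by
  rw [Ehat, comm_expand, comm_ι, comm_ι, comm_ι, comm_ι]

lemma comm_dH (n s a b : ℕ) (hodd : Odd (s+1)) (heven : ¬ Odd s)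
    (h1 : 1 ≤ a ∧ a ≤ n ∧ 1 ≤ b ∧ b ≤ n) :
    E n a b * (Hhat n (s+1) - Hhat n s) - (Hhat n (s+1) - Hhat n s) * E n a b =
      (((if 1 ≤ a ∧ a ≤ s + 1 - 1 then E n a b else 0)
        - (if 1 ≤ b ∧ b ≤ s + 1 - 1 then E n a b else 0))
      + ((if n - (s+1) + 1 ≤ a ∧ a ≤ n then E n a b else 0)
        - (if n - (s+1) + 1 ≤ b ∧ b ≤ n then E n a b else 0)))
      - (((if 1 ≤ b ∧ b ≤ s then E n a b else 0)
        - (if 1 ≤ a ∧ a ≤ s then E n a b else 0))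
      + ((if n - s + 2 ≤ b ∧ b ≤ n then E n a b else 0)
        - (if n - s + 2 ≤ a ∧ a ≤ n then E n a b else 0))) := by
  have e : E n a b * (Hhat n (s+1) - Hhat n s) - (Hhat n (s+1) - Hhat n s) * E n a b
      = (E n a b * Hhat n (s+1) - Hhat n (s+1) * E n a b)
        - (E n a b * Hhat n s - Hhat n s * E n a b) := by noncomm_ring
  rw [e, comm_Hhat_odd n (s+1) a b hodd h1, comm_Hhat_even n s a b heven h1]

theorem stmt_13 (n : ℕ) (hn : 2 ≤ n) (m p : ℕ) (hm : m = n / 2) (hp : p = (n - 1) / 2)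
    (s : ℕ) (hs0 : Even s) (hs1 : 2 ≤ s) (hs2 : s ≤ p) (hsm : s + 1 ≤ m) :
    (∀ i, 1 ≤ i → i < s →
      ι n (E n i (n - i + 1)) * Ehat n s - Ehat n s * ι n (E n i (n - i + 1)) = 0) ∧
    (ι n (E n s (n - s + 1)) * Ehat n s - Ehat n s * ι n (E n s (n - s + 1)) =
      (1 + ι n (E n s (n - s + 1))) * ι n (E n s (n - s))) ∧
    (ι n (E n (s + 1) (n - s)) * Ehat n s - Ehat n s * ι n (E n (s + 1) (n - s)) =
      -((1 + ι n (E n (s + 1) (n - s))) * ι n (E n s (n - s)))) ∧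
    (∀ i, s + 1 < i → i ≤ m →
      ι n (E n i (n - i + 1)) * Ehat n s - Ehat n s * ι n (E n i (n - i + 1)) = 0) := by
  have hn2 : 2 * s + 2 ≤ n := by omega
  have hodd : Odd (s+1) := Even.add_one hs0
  have heven : ¬ Odd s := by simpa [Nat.not_odd_iff_even] using hs0
  refine ⟨?_, ?_, ?_, ?_⟩
  · -- case (a): 1 ≤ i < s
    intro i hi1 hi2
    have hr : 1 ≤ i ∧ i ≤ n ∧ 1 ≤ n - i + 1 ∧ n - i + 1 ≤ n := by omega
    rw [comm_Ehat]
    have c1 : E n i (n-i+1) * E n (n-s+1) (n-s) - E n (n-s+1) (n-s) * E n i (n-i+1) = 0 := by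
      rw [E_mul_E n _ _ _ _ hr (by omega), E_mul_E n _ _ _ _ (by omega) hr,
        if_neg (by omega), if_neg (by omega), sub_self]
    have c2 : E n i (n-i+1) * (Hhat n (s+1) - Hhat n s)
        - (Hhat n (s+1) - Hhat n s) * E n i (n-i+1) = 0 := by
      rw [comm_dH n s i (n-i+1) hodd heven hr]
      simp only [
        show (1 ≤ i ∧ i ≤ s + 1 - 1) = True from eq_true (by omega),
        show (1 ≤ n - i + 1 ∧ n - i + 1 ≤ s + 1 - 1) = False from eq_false (by omega),
        show (n - (s+1) + 1 ≤ i ∧ i ≤ n) = False from eq_false (by omega),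
        show (n - (s+1) + 1 ≤ n - i + 1 ∧ n - i + 1 ≤ n) = True from eq_true (by omega),
        show (1 ≤ n - i + 1 ∧ n - i + 1 ≤ s) = False from eq_false (by omega),
        show (1 ≤ i ∧ i ≤ s) = True from eq_true (by omega),
        show (n - s + 2 ≤ n - i + 1 ∧ n - i + 1 ≤ n) = True from eq_true (by omega),
        show (n - s + 2 ≤ i ∧ i ≤ n) = False from eq_false (by omega),
        if_true, if_false]
      abel
    have c3 : E n i (n-i+1) * E n s (n-s) - E n s (n-s) * E n i (n-i+1) = 0 := by
      rw [E_mul_E n _ _ _ _ hr (by omega), E_mul_E n _ _ _ _ (by omega) hr,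
        if_neg (by omega), if_neg (by omega), sub_self]
    have c4 : E n i (n-i+1) * E n s (s+1) - E n s (s+1) * E n i (n-i+1) = 0 := by
      rw [E_mul_E n _ _ _ _ hr (by omega), E_mul_E n _ _ _ _ (by omega) hr,
        if_neg (by omega), if_neg (by omega), sub_self]
    rw [c1, c2, c3, c4, ι_zero]
    simp
  · -- case (b): i = s
    have hr : 1 ≤ s ∧ s ≤ n ∧ 1 ≤ n - s + 1 ∧ n - s + 1 ≤ n := by omega
    rw [comm_Ehat]
    have c1 : E n s (n-s+1) * E n (n-s+1) (n-s) - E n (n-s+1) (n-s) * E n s (n-s+1)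
        = E n s (n-s) := by
      rw [E_mul_E n _ _ _ _ hr (by omega), E_mul_E n _ _ _ _ (by omega) hr,
        if_pos rfl, if_neg (by omega), sub_zero]
    have c2 : E n s (n-s+1) * (Hhat n (s+1) - Hhat n s)
        - (Hhat n (s+1) - Hhat n s) * E n s (n-s+1) = E n s (n-s+1) := by
      rw [comm_dH n s s (n-s+1) hodd heven hr]
      simp only [
        show (1 ≤ s ∧ s ≤ s + 1 - 1) = True from eq_true (by omega),
        show (1 ≤ n - s + 1 ∧ n - s + 1 ≤ s + 1 - 1) = False from eq_false (by omega),
        show (n - (s+1) + 1 ≤ s ∧ s ≤ n) = False from eq_false (by omega),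
        show (n - (s+1) + 1 ≤ n - s + 1 ∧ n - s + 1 ≤ n) = True from eq_true (by omega),
        show (1 ≤ n - s + 1 ∧ n - s + 1 ≤ s) = False from eq_false (by omega),
        show (1 ≤ s ∧ s ≤ s) = True from eq_true (by omega),
        show (n - s + 2 ≤ n - s + 1 ∧ n - s + 1 ≤ n) = False from eq_false (by omega),
        show (n - s + 2 ≤ s ∧ s ≤ n) = False from eq_false (by omega),
        if_true, if_false]
      abel
    have c3 : E n s (n-s+1) * E n s (n-s) - E n s (n-s) * E n s (n-s+1) = 0 := by
      rw [E_mul_E n _ _ _ _ hr (by omega), E_mul_E n _ _ _ _ (by omega) hr,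
        if_neg (by omega), if_neg (by omega), sub_self]
    have c4 : E n s (n-s+1) * E n s (s+1) - E n s (s+1) * E n s (n-s+1) = 0 := by
      rw [E_mul_E n _ _ _ _ hr (by omega), E_mul_E n _ _ _ _ (by omega) hr,
        if_neg (by omega), if_neg (by omega), sub_self]
    rw [c1, c2, c3, c4, ι_zero]
    noncomm_ring
  · -- case (c): i = s + 1
    have hr : 1 ≤ s + 1 ∧ s + 1 ≤ n ∧ 1 ≤ n - s ∧ n - s ≤ n := by omega
    rw [comm_Ehat]
    have c1 : E n (s+1) (n-s) * E n (n-s+1) (n-s) - E n (n-s+1) (n-s) * E n (s+1) (n-s)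
        = 0 := by
      rw [E_mul_E n _ _ _ _ hr (by omega), E_mul_E n _ _ _ _ (by omega) hr,
        if_neg (by omega), if_neg (by omega), sub_self]
    have c2 : E n (s+1) (n-s) * (Hhat n (s+1) - Hhat n s)
        - (Hhat n (s+1) - Hhat n s) * E n (s+1) (n-s) = -(E n (s+1) (n-s)) := by
      rw [comm_dH n s (s+1) (n-s) hodd heven hr]
      simp only [
        show (1 ≤ s + 1 ∧ s + 1 ≤ s + 1 - 1) = False from eq_false (by omega),
        show (1 ≤ n - s ∧ n - s ≤ s + 1 - 1) = False from eq_false (by omega),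
        show (n - (s+1) + 1 ≤ s + 1 ∧ s + 1 ≤ n) = False from eq_false (by omega),
        show (n - (s+1) + 1 ≤ n - s ∧ n - s ≤ n) = True from eq_true (by omega),
        show (1 ≤ n - s ∧ n - s ≤ s) = False from eq_false (by omega),
        show (1 ≤ s + 1 ∧ s + 1 ≤ s) = False from eq_false (by omega),
        show (n - s + 2 ≤ n - s ∧ n - s ≤ n) = False from eq_false (by omega),
        show (n - s + 2 ≤ s + 1 ∧ s + 1 ≤ n) = False from eq_false (by omega),
        if_true, if_false]
      abel
    have c3 : E n (s+1) (n-s) * E n s (n-s) - E n s (n-s) * E n (s+1) (n-s) = 0 := by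
      rw [E_mul_E n _ _ _ _ hr (by omega), E_mul_E n _ _ _ _ (by omega) hr,
        if_neg (by omega), if_neg (by omega), sub_self]
    have c4 : E n (s+1) (n-s) * E n s (s+1) - E n s (s+1) * E n (s+1) (n-s)
        = -(E n s (n-s)) := by
      rw [E_mul_E n _ _ _ _ hr (by omega), E_mul_E n _ _ _ _ (by omega) hr,
        if_neg (by omega), if_pos rfl, zero_sub]
    rw [c1, c2, c3, c4, ι_zero, ι_neg, ι_neg]
    noncomm_ring
  · -- case (d): s + 1 < i ≤ m
    intro i hi1 hi2
    have hr : 1 ≤ i ∧ i ≤ n ∧ 1 ≤ n - i + 1 ∧ n - i + 1 ≤ n := by omega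
    rw [comm_Ehat]
    have c1 : E n i (n-i+1) * E n (n-s+1) (n-s) - E n (n-s+1) (n-s) * E n i (n-i+1) = 0 := by
      rw [E_mul_E n _ _ _ _ hr (by omega), E_mul_E n _ _ _ _ (by omega) hr,
        if_neg (by omega), if_neg (by omega), sub_self]
    have c2 : E n i (n-i+1) * (Hhat n (s+1) - Hhat n s)
        - (Hhat n (s+1) - Hhat n s) * E n i (n-i+1) = 0 := by
      rw [comm_dH n s i (n-i+1) hodd heven hr]
      simp only [
        show (1 ≤ i ∧ i ≤ s + 1 - 1) = False from eq_false (by omega),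
        show (1 ≤ n - i + 1 ∧ n - i + 1 ≤ s + 1 - 1) = False from eq_false (by omega),
        show (n - (s+1) + 1 ≤ i ∧ i ≤ n) = False from eq_false (by omega),
        show (n - (s+1) + 1 ≤ n - i + 1 ∧ n - i + 1 ≤ n) = False from eq_false (by omega),
        show (1 ≤ n - i + 1 ∧ n - i + 1 ≤ s) = False from eq_false (by omega),
        show (1 ≤ i ∧ i ≤ s) = False from eq_false (by omega),
        show (n - s + 2 ≤ n - i + 1 ∧ n - i + 1 ≤ n) = False from eq_false (by omega),
        show (n - s + 2 ≤ i ∧ i ≤ n) = False from eq_false (by omega),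
        if_true, if_false]
      abel
    have c3 : E n i (n-i+1) * E n s (n-s) - E n s (n-s) * E n i (n-i+1) = 0 := by
      rw [E_mul_E n _ _ _ _ hr (by omega), E_mul_E n _ _ _ _ (by omega) hr,
        if_neg (by omega), if_neg (by omega), sub_self]
    have c4 : E n i (n-i+1) * E n s (s+1) - E n s (s+1) * E n i (n-i+1) = 0 := by
      rw [E_mul_E n _ _ _ _ hr (by omega), E_mul_E n _ _ _ _ (by omega) hr,
        if_neg (by omega), if_neg (by omega), sub_self]
    rw [c1, c2, c3, c4, ι_zero]
    simp
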